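/- Let 0 < s < 1 and 0 < a < b. For every z in the upper or lower open half-plane, the complex number (bˢ − zˢ)(zˢ − aˢ) lies in ℂ \ (−∞, 0], where zˢ denotes the principal power. Consequently its principal square root is well defined and has positive real part. -/

import Mathlib

open Complex

theorem principal_sqrt_pos_re (s a b : ℝ) (hs0 : 0 < s) (hs1 : s < 1)
    (ha : 0 < a) (hab : a < b) (z : ℂ) (hz : z.im ≠ 0) :
    ¬ ((((b : ℂ) ^ (s : ℂ) - z ^ (s : ℂ)) * (z ^ (s : ℂ) - (a : ℂ) ^ (s : ℂ))).im = 0 ∧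
        (((b : ℂ) ^ (s : ℂ) - z ^ (s : ℂ)) * (z ^ (s : ℂ) - (a : ℂ) ^ (s : ℂ))).re ≤ 0) ∧
    0 < ((((b : ℂ) ^ (s : ℂ) - z ^ (s : ℂ)) *
          (z ^ (s : ℂ) - (a : ℂ) ^ (s : ℂ))) ^ (1 / 2 : ℂ)).re := by
  have hz0 : z ≠ 0 := fun h => hz (by simp [h])
  -- arg z facts
  have harg0 : z.arg ≠ 0 := fun h => hz (arg_eq_zero_iff.mp h).2
  have hargpi : z.arg ≠ Real.pi := fun h => hz (arg_eq_pi_iff.mp h).2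
  have hlt : z.arg < Real.pi := lt_of_le_of_ne (arg_le_pi z) hargpi
  have hgt : -Real.pi < z.arg := neg_pi_lt_arg z
  -- im of z^s is nonzero
  have hupow : z ^ (s : ℂ) = Complex.exp (Complex.log z * s) :=
    cpow_def_of_ne_zero hz0 _
  have him : (z ^ (s : ℂ)).im = Real.exp ((Complex.log z).re * s) * Real.sin (z.arg * s) := by
    rw [hupow, Complex.exp_im]
    simp [Complex.log_im]
  have hsarg : Real.sin (z.arg * s) ≠ 0 := by
    intro h
    rw [Real.sin_eq_zero_iff_of_lt_of_lt (by nlinarith [Real.pi_pos]) (by nlinarith [Real.pi_pos])] at h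
    rcases mul_eq_zero.mp h with h' | h'
    · exact harg0 h'
    · exact absurd h' (ne_of_gt hs0)
  have hy : (z ^ (s : ℂ)).im ≠ 0 := by
    rw [him]
    exact mul_ne_zero (Real.exp_ne_zero _) hsarg
  -- a^s, b^s real
  have hA : ((a : ℂ) ^ (s : ℂ)) = ((a ^ s : ℝ) : ℂ) := (ofReal_cpow ha.le s).symm
  have hB : ((b : ℂ) ^ (s : ℂ)) = ((b ^ s : ℝ) : ℂ) := (ofReal_cpow (ha.trans hab).le s).symm
  have hAB : a ^ s < b ^ s := Real.rpow_lt_rpow ha.le hab hs0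
  set x := (z ^ (s : ℂ)).re with hx
  set y := (z ^ (s : ℂ)).im with hyy
  set A := a ^ s with hAd
  set B := b ^ s with hBd
  have hwim : (((b : ℂ) ^ (s : ℂ) - z ^ (s : ℂ)) * (z ^ (s : ℂ) - (a : ℂ) ^ (s : ℂ))).im
      = y * (A + B - 2 * x) := by
    rw [hA, hB]; simp [Complex.mul_im, Complex.sub_re, Complex.sub_im]; ring
  have hwre : (((b : ℂ) ^ (s : ℂ) - z ^ (s : ℂ)) * (z ^ (s : ℂ) - (a : ℂ) ^ (s : ℂ))).re
      = (B - x) * (x - A) + y * y := by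
    rw [hA, hB]; simp [Complex.mul_re, Complex.sub_re, Complex.sub_im]; rfl
  have key : ¬ ((((b : ℂ) ^ (s : ℂ) - z ^ (s : ℂ)) * (z ^ (s : ℂ) - (a : ℂ) ^ (s : ℂ))).im = 0 ∧
        (((b : ℂ) ^ (s : ℂ) - z ^ (s : ℂ)) * (z ^ (s : ℂ) - (a : ℂ) ^ (s : ℂ))).re ≤ 0) := by
    rintro ⟨h1, h2⟩
    rw [hwim] at h1
    rw [hwre] at h2
    have hx2 : A + B - 2 * x = 0 := by
      rcases mul_eq_zero.mp h1 with h | h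
      · exact absurd h hy
      · exact h
    nlinarith [mul_self_pos.mpr hy, hAB]
  refine ⟨key, ?_⟩
  set w := (((b : ℂ) ^ (s : ℂ) - z ^ (s : ℂ)) * (z ^ (s : ℂ) - (a : ℂ) ^ (s : ℂ))) with hw
  have hw0 : w ≠ 0 := by
    intro h
    exact key ⟨by simp [h], by simp [h]⟩
  have hwargpi : w.arg ≠ Real.pi := by
    intro h
    obtain ⟨h1, h2⟩ := arg_eq_pi_iff.mp h
    exact key ⟨h2, h1.le⟩
  have hwlt : w.arg < Real.pi := lt_of_le_of_ne (arg_le_pi w) hwargpi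
  have hwgt : -Real.pi < w.arg := neg_pi_lt_arg w
  rw [cpow_def_of_ne_zero hw0, Complex.exp_re]
  have him2 : (Complex.log w * (1 / 2 : ℂ)).im = w.arg / 2 := by
    simp [Complex.log_im]; ring
  rw [him2]
  have hcos : 0 < Real.cos (w.arg / 2) := by
    apply Real.cos_pos_of_mem_Ioo
    constructor <;> [linarith; linarith]
  positivity
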